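/- A 𝒱-enriched 𝒮-sorted equational theory is equivalently given by a 𝒱-enriched 𝒮-sorted signature Σ and a classical 𝒮-sorted equational theory over the underlying classical signature |Σ|. Precisely: (1) for every 𝒱-enriched 𝒮-sorted equational theory 𝒯 = (Σ, ℰ) there is a classical 𝒮-sorted equational theory |𝒯| = (|Σ|, |ℰ|) over |Σ| such that a Σ-algebra A is a 𝒯-algebra iff the underlying |Σ|-algebra |A| is a |𝒯|-algebra; (2) conversely, for every 𝒱-enriched 𝒮-sorted signature Σ and classical 𝒮-sorted equational theory 𝒯 = (|Σ|, ℰ) over |Σ| there is a 𝒱-enriched 𝒮-sorted equational theory 𝒯̂ = (Σ, ℰ̂) over Σ such that a Σ-algebra A is a 𝒯̂-algebra iff |A| is a 𝒯-algebra. -/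

import Mathlib

universe u

/-- A topological construct over `Set`: an amnestic concrete category over types,
presented by a class of structures on each type together with an admissibility
predicate on functions, in which every structured source has an initial lift and
every structured sink has a final lift (index types in `Type (u+1)` suffice for
all the "large" sources/sinks we consider). -/
structure TopConstruct : Type (u + 2) where
  Str : Type u → Type (u + 1)
  Adm : ∀ {X Y : Type u}, Str X → Str Y → (X → Y) → Prop
  adm_id : ∀ {X : Type u} (s : Str X), Adm s s id
  adm_comp : ∀ {X Y Z : Type u} {s : Str X} {t : Str Y} {r : Str Z} {f : X → Y} {g : Y → Z},
    Adm s t f → Adm t r g → Adm s r (g ∘ f)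
  amnestic : ∀ {X : Type u} (s t : Str X), Adm s t id → Adm t s id → s = t
  iLift : ∀ {X : Type u} {I : Type (u + 1)} (T : I → Type u) (t : ∀ i, Str (T i))
    (f : ∀ i, X → T i), Str X
  iLift_adm : ∀ {X : Type u} {I : Type (u + 1)} (T : I → Type u) (t : ∀ i, Str (T i))
    (f : ∀ i, X → T i) (i : I), Adm (iLift T t f) (t i) (f i)
  iLift_initial : ∀ {X : Type u} {I : Type (u + 1)} (T : I → Type u) (t : ∀ i, Str (T i))
    (f : ∀ i, X → T i) {W : Type u} (w : Str W) (g : W → X),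
    (∀ i, Adm w (t i) (fun x => f i (g x))) → Adm w (iLift T t f) g
  fLift : ∀ {X : Type u} {I : Type (u + 1)} (T : I → Type u) (t : ∀ i, Str (T i))
    (f : ∀ i, T i → X), Str X
  fLift_adm : ∀ {X : Type u} {I : Type (u + 1)} (T : I → Type u) (t : ∀ i, Str (T i))
    (f : ∀ i, T i → X) (i : I), Adm (t i) (fLift T t f) (f i)
  fLift_final : ∀ {X : Type u} {I : Type (u + 1)} (T : I → Type u) (t : ∀ i, Str (T i))
    (f : ∀ i, T i → X) {W : Type u} (w : Str W) (g : X → W),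
    (∀ i, Adm (t i) w (fun x => g (f i x))) → Adm (fLift T t f) w g

namespace TopConstruct

variable (V : TopConstruct.{u})

/-- The objects of the topological category `V`. -/
def Obj : Type (u + 1) := Σ X : Type u, V.Str X

/-- The fibre (partial) order over a fixed underlying set. -/
def fibLe {X : Type u} (s t : V.Str X) : Prop := V.Adm s t id

/-- Infima in the fibres (initial lift of a structured source of identities). -/
def fibInf {X : Type u} {I : Type (u + 1)} (s : I → V.Str X) : V.Str X :=
  V.iLift (fun _ => X) s fun _ => id

/-- Suprema in the fibres (final lift of a structured sink of identities). -/
def fibSup {X : Type u} {I : Type (u + 1)} (s : I → V.Str X) : V.Str X :=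
  V.fLift (fun _ => X) s fun _ => id

/-- Binary suprema in the fibres. -/
def fibSup2 {X : Type u} (s t : V.Str X) : V.Str X :=
  V.fibSup fun b : ULift.{u + 1} Bool => bif b.down then s else t

/-- Initial lift of a single structured map. -/
def iLift1 {X Y : Type u} (t : V.Str Y) (f : X → Y) : V.Str X :=
  V.iLift (I := PUnit.{u + 2}) (fun _ => Y) (fun _ => t) fun _ => f

/-- Final lift of a single structured map. -/
def fLift1 {X Y : Type u} (t : V.Str X) (f : X → Y) : V.Str Y :=
  V.fLift (I := PUnit.{u + 2}) (fun _ => X) (fun _ => t) fun _ => f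

/-- The indiscrete structure (top of the fibre). -/
def indisc (X : Type u) : V.Str X :=
  V.iLift (I := PEmpty.{u + 2}) (fun e => e.elim) (fun e => e.elim) fun e => e.elim

/-- The discrete structure (bottom of the fibre). -/
def disc (X : Type u) : V.Str X :=
  V.fLift (I := PEmpty.{u + 2}) (fun e => e.elim) (fun e => e.elim) fun e => e.elim

/-- The product structure on a finitely-indexed (or any `Type 0`-indexed) family. -/
def piStrF {I : Type} {T : I → Type u} (t : ∀ i, V.Str (T i)) : V.Str (∀ i, T i) :=
  V.iLift (I := ULift.{u + 1} I) (fun i => T i.down) (fun i => t i.down) fun i g => g i.down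

/-- The product structure on a `Type u`-indexed family. -/
def piStrU {I : Type u} {T : I → Type u} (t : ∀ i, V.Str (T i)) : V.Str (∀ i, T i) :=
  V.iLift (I := ULift.{u + 1} I) (fun i => T i.down) (fun i => t i.down) fun i g => g i.down

/-- The binary (cartesian) product structure. -/
def prodStr {X Y : Type u} (s : V.Str X) (t : V.Str Y) : V.Str (X × Y) :=
  V.iLift (I := ULift.{u + 1} Bool) (fun b => Bool.rec Y X b.down)
    (fun b => Bool.rec (motive := fun c => V.Str (Bool.rec Y X c)) t s b.down)
    (fun b => Bool.rec (motive := fun c => X × Y → Bool.rec Y X c) Prod.snd Prod.fst b.down)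

end TopConstruct

/-- Cartesian closedness of a topological construct, witnessed concretely:
each hom-set carries an exponential structure for which admissibility of a map
into the exponential is equivalent to admissibility of its uncurrying. -/
structure CartesianClosed (V : TopConstruct.{u}) : Type (u + 1) where
  exp : ∀ {X Y : Type u} (s : V.Str X) (t : V.Str Y), V.Str {f : X → Y // V.Adm s t f}
  adm_curry_iff : ∀ {X Y Z : Type u} (s : V.Str X) (t : V.Str Y) (c : V.Str Z)
    (g : Z → {f : X → Y // V.Adm s t f}),
    V.Adm c (exp s t) g ↔ V.Adm (V.prodStr c s) t fun p => (g p.1).1 p.2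

/-- A symmetric monoidal structure on a topological construct `V` for which the
forgetful functor to `Set` is strict symmetric monoidal with respect to the
cartesian structure on `Set`. -/
structure MonStr (V : TopConstruct.{u}) : Type (u + 1) where
  tens : ∀ {X Y : Type u}, V.Str X → V.Str Y → V.Str (X × Y)
  unitStr : V.Str PUnit.{u + 1}
  tens_adm : ∀ {X X' Y Y' : Type u} {s : V.Str X} {s' : V.Str X'} {t : V.Str Y} {t' : V.Str Y'}
    {f : X → X'} {g : Y → Y'}, V.Adm s s' f → V.Adm t t' g →
    V.Adm (tens s t) (tens s' t') (Prod.map f g)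
  swap_adm : ∀ {X Y : Type u} (s : V.Str X) (t : V.Str Y), V.Adm (tens s t) (tens t s) Prod.swap
  assoc_adm : ∀ {X Y Z : Type u} (s : V.Str X) (t : V.Str Y) (r : V.Str Z),
    V.Adm (tens (tens s t) r) (tens s (tens t r)) fun p => (p.1.1, (p.1.2, p.2))
  assoc_inv_adm : ∀ {X Y Z : Type u} (s : V.Str X) (t : V.Str Y) (r : V.Str Z),
    V.Adm (tens s (tens t r)) (tens (tens s t) r) fun p => ((p.1, p.2.1), p.2.2)
  lunit_adm : ∀ {X : Type u} (s : V.Str X), V.Adm (tens unitStr s) s Prod.snd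
  lunit_inv_adm : ∀ {X : Type u} (s : V.Str X), V.Adm s (tens unitStr s) fun x => (PUnit.unit, x)
  runit_adm : ∀ {X : Type u} (s : V.Str X), V.Adm (tens s unitStr) s Prod.fst
  runit_inv_adm : ∀ {X : Type u} (s : V.Str X), V.Adm s (tens s unitStr) fun x => (x, PUnit.unit)

/-- The statement that the symmetric monoidal structure `M` is the cartesian one. -/
def MonStr.IsCartesian {V : TopConstruct.{u}} (M : MonStr V) : Prop :=
  (∀ {X Y : Type u} (s : V.Str X) (t : V.Str Y), M.tens s t = V.prodStr s t) ∧
    M.unitStr = V.indisc PUnit.{u + 1}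
universe v

/-- A classical `S`-sorted signature. -/
structure ClassSig (S : Type u) : Type (u + 1) where
  Op : Type u
  ar : Op → List S
  out : Op → S

/-- A classical `S`-sorted algebra (in `Set`) for a classical signature. -/
structure ClassAlg {S : Type u} (Sg : ClassSig S) : Type (u + 1) where
  car : S → Type u
  op : ∀ σ : Sg.Op, (∀ i : Fin (Sg.ar σ).length, car ((Sg.ar σ).get i)) → car (Sg.out σ)

/-- A morphism of classical algebras. -/
def IsClsHom {S : Type u} {Sg : ClassSig S} (A B : ClassAlg Sg)
    (h : ∀ s, A.car s → B.car s) : Prop :=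
  ∀ (σ : Sg.Op) (ts : ∀ i : Fin (Sg.ar σ).length, A.car ((Sg.ar σ).get i)),
    h _ (A.op σ ts) = B.op σ fun i => h _ (ts i)

/-- Ground terms over a classical signature with constants from `X`. -/
inductive Tm {S : Type u} (Sg : ClassSig S) (X : S → Type v) : S → Type (max u v)
  | var {s : S} : X s → Tm Sg X s
  | app (σ : Sg.Op) (ts : ∀ i : Fin (Sg.ar σ).length, Tm Sg X ((Sg.ar σ).get i)) :
      Tm Sg X (Sg.out σ)

/-- The term algebra (the free classical algebra) on an `S`-sorted set. -/
def termAlg {S : Type u} (Sg : ClassSig S) (X : S → Type u) : ClassAlg Sg :=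
  ⟨Tm Sg X, fun σ ts => .app σ ts⟩

/-- The unique extension of `f` to a homomorphism out of the term algebra
(the adjoint transpose `f^♯`). -/
def Tm.extend {S : Type u} {Sg : ClassSig S} {X : S → Type v} (B : ClassAlg Sg)
    (f : ∀ s, X s → B.car s) : ∀ {s : S}, Tm Sg X s → B.car s
  | _, .var x => f _ x
  | _, .app σ ts => B.op σ fun i => Tm.extend B f (ts i)

/-- Variables of a context: positions of the context list of the given sort. -/
def CtxVar {S : Type u} (Γ : List S) (s : S) : Type := {i : Fin Γ.length // Γ.get i = s}

/-- A syntactic equation in context over a classical signature. -/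
structure SynEq {S : Type u} (Sg : ClassSig S) : Type u where
  ctx : List S
  sort : S
  lhs : Tm Sg (CtxVar ctx) sort
  rhs : Tm Sg (CtxVar ctx) sort

/-- Interpretation of a term in context in a classical algebra at a valuation. -/
def ctxInterp {S : Type u} {Sg : ClassSig S} (B : ClassAlg Sg) {Γ : List S} {s : S}
    (t : Tm Sg (CtxVar Γ) s) (as : ∀ i : Fin Γ.length, B.car (Γ.get i)) : B.car s :=
  Tm.extend (X := CtxVar Γ) B (fun _ x => x.2 ▸ as x.1) t

/-- Satisfaction of a syntactic equation in context by a classical algebra. -/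
def ClsSat {S : Type u} {Sg : ClassSig S} (B : ClassAlg Sg) (e : SynEq Sg) : Prop :=
  ∀ as : ∀ i : Fin e.ctx.length, B.car (e.ctx.get i),
    ctxInterp B e.lhs as = ctxInterp B e.rhs as

/-- A congruence on a classical algebra. -/
def IsClsCong {S : Type u} {Sg : ClassSig S} (B : ClassAlg Sg)
    (r : ∀ s, B.car s → B.car s → Prop) : Prop :=
  (∀ s, Equivalence (r s)) ∧
    ∀ (σ : Sg.Op) (ts us : ∀ i : Fin (Sg.ar σ).length, B.car ((Sg.ar σ).get i)),
      (∀ i, r _ (ts i) (us i)) → r _ (B.op σ ts) (B.op σ us)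

/-- The congruence on a classical algebra generated by a set of syntactic
equations in context: the smallest congruence identifying the interpretations
of the two sides of each equation at all valuations. -/
def congGen {S : Type u} {Sg : ClassSig S} (B : ClassAlg Sg) (E : Set (SynEq Sg)) :
    ∀ s, B.car s → B.car s → Prop := fun s a b =>
  ∀ r : ∀ s, B.car s → B.car s → Prop, IsClsCong B r →
    (∀ e ∈ E, ∀ as, r e.sort (ctxInterp B e.lhs as) (ctxInterp B e.rhs as)) → r s a b

/-- A `V`-enriched `S`-sorted signature: operation symbols with input sorts,
an output sort and a parameter object of `V`. -/
structure VSig (V : TopConstruct.{u}) (S : Type u) : Type (u + 1) where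
  Op : Type u
  ar : Op → List S
  out : Op → S
  parC : Op → Type u
  parS : ∀ σ, V.Str (parC σ)

/-- The underlying classical `S`-sorted signature `|Σ|` of a `V`-enriched one:
one operation symbol `σ_p` for every `σ` and every point `p` of its parameter. -/
def VSig.toClass {V : TopConstruct.{u}} {S : Type u} (Sg : VSig V S) : ClassSig S where
  Op := Σ σ : Sg.Op, Sg.parC σ
  ar := fun σ => Sg.ar σ.1
  out := fun σ => Sg.out σ.1

/-- A `Σ`-algebra for a `V`-enriched `S`-sorted signature (relative to a
symmetric monoidal structure `M` on `V`): an `S`-sorted object of `V` equipped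
with an admissible operation `P ⊗ (A_{S₁} × ⋯ × A_{Sₙ}) → A_S` for each `σ`. -/
structure VAlg (V : TopConstruct.{u}) (M : MonStr V) {S : Type u} (Sg : VSig V S) :
    Type (u + 1) where
  car : S → Type u
  str : ∀ s, V.Str (car s)
  op : ∀ σ : Sg.Op,
    Sg.parC σ × (∀ i : Fin (Sg.ar σ).length, car ((Sg.ar σ).get i)) → car (Sg.out σ)
  op_adm : ∀ σ : Sg.Op,
    V.Adm (M.tens (Sg.parS σ) (V.piStrF fun i => str ((Sg.ar σ).get i))) (str (Sg.out σ)) (op σ)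

/-- The underlying classical `|Σ|`-algebra of a `Σ`-algebra. -/
def VAlg.cls {V : TopConstruct.{u}} {M : MonStr V} {S : Type u} {Sg : VSig V S}
    (A : VAlg V M Sg) : ClassAlg Sg.toClass :=
  ⟨A.car, fun σ ts => A.op σ.1 (σ.2, ts)⟩

/-- A morphism of `Σ`-algebras: an `S`-sorted admissible family commuting with
all the operations. -/
def IsVHom {V : TopConstruct.{u}} {M : MonStr V} {S : Type u} {Sg : VSig V S}
    (A B : VAlg V M Sg) (h : ∀ s, A.car s → B.car s) : Prop :=
  (∀ s, V.Adm (A.str s) (B.str s) (h s)) ∧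
    ∀ (σ : Sg.Op) (p : Sg.parC σ) (ts : ∀ i : Fin (Sg.ar σ).length, A.car ((Sg.ar σ).get i)),
      h _ (A.op σ (p, ts)) = B.op σ (p, fun i => h _ (ts i))
/-- The components of a candidate algebraic `Σ`-operation with input sorts
`ins`, output sort `o` and parameter carrier `P`. -/
def OpFam (V : TopConstruct.{u}) (M : MonStr V) {S : Type u} (Sg : VSig V S)
    (ins : List S) (o : S) (P : Type u) : Type (u + 1) :=
  ∀ A : VAlg V M Sg, P × (∀ i : Fin ins.length, A.car (ins.get i)) → A.car o

/-- Admissibility of all components of a candidate algebraic `Σ`-operation. -/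
def OpAdm {V : TopConstruct.{u}} {M : MonStr V} {S : Type u} {Sg : VSig V S}
    {ins : List S} {o : S} {P : Type u} (pS : V.Str P) (ω : OpFam V M Sg ins o P) : Prop :=
  ∀ A : VAlg V M Sg,
    V.Adm (M.tens pS (V.piStrF fun i => A.str (ins.get i))) (A.str o) (ω A)

/-- Naturality of a candidate algebraic `Σ`-operation. -/
def OpNat {V : TopConstruct.{u}} {M : MonStr V} {S : Type u} {Sg : VSig V S}
    {ins : List S} {o : S} {P : Type u} (ω : OpFam V M Sg ins o P) : Prop :=
  ∀ (A B : VAlg V M Sg) (h : ∀ s, A.car s → B.car s), IsVHom A B h →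
    ∀ (p : P) (ts : ∀ i : Fin ins.length, A.car (ins.get i)),
      h o (ω A (p, ts)) = ω B (p, fun i => h _ (ts i))

/-- An algebraic `Σ`-equation: a pair of algebraic `Σ`-operations
(natural transformations `P ⊗ U^{S̄} ⟹ U^S`) of the same type. -/
structure AlgEq (V : TopConstruct.{u}) (M : MonStr V) {S : Type u} (Sg : VSig V S) :
    Type (u + 1) where
  ins : List S
  out : S
  parC : Type u
  parS : V.Str parC
  lhs : OpFam V M Sg ins out parC
  rhs : OpFam V M Sg ins out parC
  lhs_adm : OpAdm parS lhs
  rhs_adm : OpAdm parS rhs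
  lhs_nat : OpNat lhs
  rhs_nat : OpNat rhs

/-- Satisfaction of an algebraic `Σ`-equation by a `Σ`-algebra. -/
def VSat {V : TopConstruct.{u}} {M : MonStr V} {S : Type u} {Sg : VSig V S}
    (A : VAlg V M Sg) (e : AlgEq V M Sg) : Prop :=
  e.lhs A = e.rhs A

/-- The indiscrete `Σ`-algebra determined by a classical `|Σ|`-algebra. -/
def indiscAlg (V : TopConstruct.{u}) (M : MonStr V) {S : Type u} (Sg : VSig V S)
    (B : ClassAlg Sg.toClass) : VAlg V M Sg where
  car := B.car
  str := fun s => V.indisc (B.car s)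
  op := fun σ pts => B.op ⟨σ, pts.1⟩ pts.2
  op_adm := fun σ => V.iLift_initial _ _ _ _ _ fun i => i.elim
section Aux

variable {V : TopConstruct.{u}} {M : MonStr V} {S : Type u} {Sg : VSig V S}

/-- Every map out of a discrete object is admissible. -/
theorem adm_from_disc (V : TopConstruct.{u}) {X Y : Type u} (t : V.Str Y) (f : X → Y) :
    V.Adm (V.disc X) t f :=
  V.fLift_final (I := PEmpty.{u + 2}) (fun e => e.elim) (fun e => e.elim) (fun e => e.elim)
    t f (fun e => e.elim)

/-- Every map into an indiscrete object is admissible. -/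
theorem adm_to_indisc (V : TopConstruct.{u}) {X Y : Type u} (s : V.Str X) (g : X → Y) :
    V.Adm s (V.indisc Y) g :=
  V.iLift_initial (I := PEmpty.{u + 2}) (fun e => e.elim) (fun e => e.elim) (fun e => e.elim)
    s g (fun e => e.elim)

/-- The interpretation of a classical term in (the underlying classical algebra of) a
`Σ`-algebra, paired with a discrete `PUnit` parameter, is admissible. -/
theorem interp_adm (A : VAlg V M Sg) {Γ : List S} {s : S} (t : Tm Sg.toClass (CtxVar Γ) s) :
    V.Adm (M.tens (V.disc PUnit.{u + 1}) (V.piStrF fun i => A.str (Γ.get i))) (A.str s)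
      (fun p => ctxInterp A.cls t p.2) := by
  induction t with
  | @var s x =>
    obtain ⟨i, rfl⟩ := x
    have h1 : V.Adm (M.tens (V.disc PUnit.{u + 1}) (V.piStrF fun i => A.str (Γ.get i)))
        (M.tens M.unitStr (V.piStrF fun i => A.str (Γ.get i))) (Prod.map id id) :=
      M.tens_adm (adm_from_disc V _ id) (V.adm_id _)
    have h2 := V.adm_comp h1 (M.lunit_adm (V.piStrF fun i => A.str (Γ.get i)))
    have h3 := V.adm_comp h2
      (V.iLift_adm (X := ∀ i : Fin Γ.length, A.car (Γ.get i))
        (fun j : ULift.{u + 1} (Fin Γ.length) => A.car (Γ.get j.down))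
        (fun j => A.str (Γ.get j.down)) (fun j g => g j.down) (ULift.up i))
    exact h3
  | @app σp ts ih =>
    have hdiag : V.Adm (V.disc PUnit.{u + 1})
        (M.tens (V.disc PUnit.{u + 1}) (V.disc PUnit.{u + 1})) (fun u => (u, u)) :=
      adm_from_disc V _ _
    have h1 := M.tens_adm hdiag (V.adm_id (V.piStrF fun i => A.str (Γ.get i)))
    have h2 := V.adm_comp h1 (M.assoc_adm _ _ _)
    have hinner : V.Adm (M.tens (V.disc PUnit.{u + 1}) (V.piStrF fun i => A.str (Γ.get i)))
        (V.piStrF fun i => A.str ((Sg.ar σp.1).get i))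
        (fun p => fun i => ctxInterp A.cls (ts i) p.2) :=
      V.iLift_initial (X := ∀ i : Fin (Sg.ar σp.1).length, A.car ((Sg.ar σp.1).get i))
        (fun j : ULift.{u + 1} (Fin (Sg.ar σp.1).length) => A.car ((Sg.ar σp.1).get j.down))
        (fun j => A.str ((Sg.ar σp.1).get j.down)) (fun j g => g j.down) _ _
        (fun j => ih j.down)
    have h3 := M.tens_adm (adm_from_disc V (X := PUnit.{u + 1}) (Sg.parS σp.1) (fun _ => σp.2)) hinner
    have h4 := V.adm_comp h2 h3
    have h5 := V.adm_comp h4 (A.op_adm σp.1)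
    exact h5

/-- The interpretation of a classical term commutes with (the underlying maps of)
morphisms of `Σ`-algebras. -/
theorem interp_opnat {Γ : List S} {s : S} (t : Tm Sg.toClass (CtxVar Γ) s)
    (A B : VAlg V M Sg) (h : ∀ s, A.car s → B.car s) (hv : IsVHom A B h)
    (as : ∀ i : Fin Γ.length, A.car (Γ.get i)) :
    h s (ctxInterp A.cls t as) = ctxInterp B.cls t (fun i => h _ (as i)) := by
  induction t with
  | @var s x =>
    obtain ⟨i, rfl⟩ := x
    rfl
  | @app σp ts ih =>
    show h _ (A.op σp.1 (σp.2, fun i => ctxInterp A.cls (ts i) as)) = _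
    refine (hv.2 σp.1 σp.2 _).trans ?_
    exact congrArg (fun v => B.op σp.1 (σp.2, v)) (funext fun i => ih i)

/-- The algebraic `Σ`-equation determined by a syntactic `|Σ|`-equation in context. -/
def synToAlg (e' : SynEq Sg.toClass) : AlgEq V M Sg where
  ins := e'.ctx
  out := e'.sort
  parC := PUnit.{u + 1}
  parS := V.disc PUnit.{u + 1}
  lhs := fun A p => ctxInterp A.cls e'.lhs p.2
  rhs := fun A p => ctxInterp A.cls e'.rhs p.2
  lhs_adm := fun A => interp_adm A e'.lhs
  rhs_adm := fun A => interp_adm A e'.rhs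
  lhs_nat := fun A B h hv p ts => interp_opnat e'.lhs A B h hv ts
  rhs_nat := fun A B h hv p ts => interp_opnat e'.rhs A B h hv ts

/-- The generic `Σ`-algebra on a context: the indiscrete algebra on the classical
term algebra over the (lifted) variables of the context. -/
def genAlg (V : TopConstruct.{u}) (M : MonStr V) {S : Type u} (Sg : VSig V S) (Γ : List S) :
    VAlg V M Sg :=
  indiscAlg V M Sg (termAlg Sg.toClass (fun s => ULift.{u} (CtxVar Γ s)))

/-- Unlift a term over lifted variables. -/
def unliftTm {Γ : List S} : ∀ {s : S},
    Tm Sg.toClass (fun s => ULift.{u} (CtxVar Γ s)) s → Tm Sg.toClass (CtxVar Γ) s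
  | _, .var x => .var x.down
  | _, .app σ ts => .app σ (fun i => unliftTm (ts i))

theorem interp_unlift {Γ : List S} (B : ClassAlg Sg.toClass)
    (as : ∀ i : Fin Γ.length, B.car (Γ.get i)) :
    ∀ {s : S} (u : Tm Sg.toClass (fun s => ULift.{u} (CtxVar Γ s)) s),
      ctxInterp B (unliftTm u) as =
        Tm.extend B (fun s (x : ULift.{u} (CtxVar Γ s)) => x.down.2 ▸ as x.down.1) u
  | _, .var _ => rfl
  | _, .app σ ts => congrArg _ (funext fun i => interp_unlift B as (ts i))

/-- The term associated with a natural family at a parameter point. -/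
def termOf {ins : List S} {o : S} {P : Type u} (ω : OpFam V M Sg ins o P) (p : P) :
    Tm Sg.toClass (CtxVar ins) o :=
  unliftTm (ω (genAlg V M Sg ins) (p, fun i => Tm.var (ULift.up ⟨i, rfl⟩)))

/-- Every natural family is, pointwise in the parameter, the interpretation of a term. -/
theorem termOf_spec {ins : List S} {o : S} {P : Type u} (ω : OpFam V M Sg ins o P)
    (hnat : OpNat ω) (A : VAlg V M Sg) (p : P)
    (as : ∀ i : Fin ins.length, A.car (ins.get i)) :
    ω A (p, as) = ctxInterp A.cls (termOf ω p) as := by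
  have hid : IsVHom A (indiscAlg V M Sg A.cls) (fun _ x => x) :=
    ⟨fun s => adm_to_indisc V _ _, fun σ q ts => rfl⟩
  have h1 := hnat A (indiscAlg V M Sg A.cls) (fun _ x => x) hid p as
  have hv : IsVHom (genAlg V M Sg ins) (indiscAlg V M Sg A.cls)
      (fun t u => Tm.extend A.cls (fun s (x : ULift.{u} (CtxVar ins s)) => x.down.2 ▸ as x.down.1) u) :=
    ⟨fun s => adm_to_indisc V _ _, fun σ q ts => rfl⟩
  have h2 := hnat (genAlg V M Sg ins) (indiscAlg V M Sg A.cls)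
    (fun t u => Tm.extend A.cls (fun s (x : ULift.{u} (CtxVar ins s)) => x.down.2 ▸ as x.down.1) u) hv p
    (fun i => Tm.var (ULift.up ⟨i, rfl⟩))
  have h3 := interp_unlift A.cls as
    (ω (genAlg V M Sg ins) (p, fun i => Tm.var (ULift.up ⟨i, rfl⟩)))
  exact h1.trans (h2.symm.trans h3.symm)

end Aux

/-- A `𝒱`-enriched `𝒮`-sorted equational theory is equivalently
given by a `𝒱`-enriched `𝒮`-sorted signature `Σ` and a classical `𝒮`-sorted
equational theory over `|Σ|`.  (1) For every set `ℰ` of algebraic `Σ`-equations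
there is a set `|ℰ|` of syntactic `|Σ|`-equations in context such that a
`Σ`-algebra `A` is a `(Σ,ℰ)`-algebra iff `|A|` is a `(|Σ|,|ℰ|)`-algebra;
(2) conversely, for every set `ℰ` of syntactic `|Σ|`-equations in context there is
a set `ℰ̂` of algebraic `Σ`-equations such that a `Σ`-algebra `A` is a
`(Σ,ℰ̂)`-algebra iff `|A|` is a `(|Σ|,ℰ)`-algebra. -/
theorem statement10 (V : TopConstruct.{u}) (M : MonStr V) {S : Type u} (Sg : VSig V S) :
    (∀ E : Set (AlgEq V M Sg), ∃ E' : Set (SynEq Sg.toClass),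
      ∀ A : VAlg V M Sg, (∀ e ∈ E, VSat A e) ↔ ∀ e' ∈ E', ClsSat A.cls e') ∧
    (∀ E' : Set (SynEq Sg.toClass), ∃ E : Set (AlgEq V M Sg),
      ∀ A : VAlg V M Sg, (∀ e ∈ E, VSat A e) ↔ ∀ e' ∈ E', ClsSat A.cls e') := by
  constructor
  · intro E
    refine ⟨{e' | ∃ e ∈ E, ∃ p : e.parC,
      e' = ⟨e.ins, e.out, termOf e.lhs p, termOf e.rhs p⟩}, fun A => ⟨?_, ?_⟩⟩
    · rintro hA e' ⟨e, heE, p, rfl⟩ as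
      show ctxInterp A.cls (termOf e.lhs p) as = ctxInterp A.cls (termOf e.rhs p) as
      rw [← termOf_spec e.lhs e.lhs_nat A p as, ← termOf_spec e.rhs e.rhs_nat A p as]
      exact congrFun (hA e heE) (p, as)
    · intro hE e heE
      funext x
      obtain ⟨p, as⟩ := x
      rw [show e.lhs A (p, as) = _ from termOf_spec e.lhs e.lhs_nat A p as,
        show e.rhs A (p, as) = _ from termOf_spec e.rhs e.rhs_nat A p as]
      exact hE _ ⟨e, heE, p, rfl⟩ as
  · intro E'
    refine ⟨{e | ∃ e' ∈ E', e = synToAlg e'}, fun A => ⟨?_, ?_⟩⟩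
    · rintro hA e' he' as
      exact congrFun (hA _ ⟨e', he', rfl⟩) (PUnit.unit, as)
    · rintro hE e ⟨e', he', rfl⟩
      funext x
      obtain ⟨p, as⟩ := x
      exact hE e' he' as
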